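/- Let q be an odd prime power, G the Heisenberg group over F_q with center Z, and for i ∈ F_q let X_i = {e} ∪ { (α, β, γ_i(α,β)) : (α,β) ≠ (0,0) } where γ_i(α,β) = αβ/2 + (α² − εβ²)i for a fixed nonsquare ε. Then in ZG: X_i·X_{-i} = q²·e + q·(G − Z), i.e., each X_i is a semiregular RDS with forbidden subgroup Z and parameters (q², q, q², q). -/

import Mathlib

/-- The Heisenberg group of dimension 3 over a field `F`, with coordinates `(x, y, z)`
corresponding to the unitriangular matrix `[[1,x,z],[0,1,y],[0,0,1]]`. -/
def Heis (F : Type*) := F × F × F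

namespace Heis
variable {F : Type*} [Field F]

instance : Mul (Heis F) :=
  ⟨fun a b => (a.1 + b.1, a.2.1 + b.2.1, a.2.2 + b.2.2 + a.1 * b.2.1)⟩
instance : One (Heis F) := ⟨((0 : F), (0 : F), (0 : F))⟩
instance : Inv (Heis F) := ⟨fun a => (-a.1, -a.2.1, -a.2.2 + a.1 * a.2.1)⟩

lemma mul_def (a b : Heis F) :
    a * b = (a.1 + b.1, a.2.1 + b.2.1, a.2.2 + b.2.2 + a.1 * b.2.1) := rfl
lemma one_def : (1 : Heis F) = ((0 : F), (0 : F), (0 : F)) := rfl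
lemma inv_def (a : Heis F) : a⁻¹ = (-a.1, -a.2.1, -a.2.2 + a.1 * a.2.1) := rfl

instance : Group (Heis F) where
  mul_assoc a b c := by
    simp only [mul_def]
    exact Prod.ext (by show a.1 + b.1 + c.1 = a.1 + (b.1 + c.1); ring)
      (Prod.ext (by show a.2.1 + b.2.1 + c.2.1 = a.2.1 + (b.2.1 + c.2.1); ring)
        (by show a.2.2 + b.2.2 + a.1 * b.2.1 + c.2.2 + (a.1 + b.1) * c.2.1 =
              a.2.2 + (b.2.2 + c.2.2 + b.1 * c.2.1) + a.1 * (b.2.1 + c.2.1); ring))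
  one_mul a := by
    obtain ⟨x, y, z⟩ := a
    simp only [mul_def, one_def]
    exact Prod.ext (by show 0 + x = x; simp) (Prod.ext (by show 0 + y = y; simp)
      (by show 0 + z + 0 * y = z; simp))
  mul_one a := by
    obtain ⟨x, y, z⟩ := a
    simp only [mul_def, one_def]
    exact Prod.ext (by show x + 0 = x; simp) (Prod.ext (by show y + 0 = y; simp)
      (by show z + 0 + x * 0 = z; simp))
  inv_mul_cancel a := by
    obtain ⟨x, y, z⟩ := a
    simp only [mul_def, inv_def, one_def]
    exact Prod.ext (by show -x + x = 0; simp) (Prod.ext (by show -y + y = 0; simp)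
      (by show -z + x * y + z + -x * y = 0; ring))

instance [DecidableEq F] : DecidableEq (Heis F) :=
  inferInstanceAs (DecidableEq (F × F × F))

instance [Fintype F] : Fintype (Heis F) :=
  inferInstanceAs (Fintype (F × F × F))

end Heis

open Finset MonoidAlgebra Heis

/-- The element of the integral group ring `ℤG` given by the sum of the elements of `X`. -/
noncomputable def gsum {G : Type*} [Group G] (X : Finset G) : MonoidAlgebra ℤ G :=
  ∑ x ∈ X, MonoidAlgebra.single x (1 : ℤ)

section helpers
variable {G : Type*} [Group G] [DecidableEq G]

lemma gsum_apply (X : Finset G) (g : G) :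
    (gsum X).coeff g = if g ∈ X then 1 else 0 := by
  unfold gsum
  rw [MonoidAlgebra.coeff_sum, Finsupp.finset_sum_apply]
  simp_rw [MonoidAlgebra.coeff_single, Finsupp.single_apply]
  rw [Finset.sum_ite_eq' X g (fun _ => (1:ℤ))]

lemma gsum_mul_apply (X Y : Finset G) (g : G) :
    (gsum X * gsum Y).coeff g = ((X.filter (fun x => x⁻¹ * g ∈ Y)).card : ℤ) := by
  unfold gsum
  rw [Finset.sum_mul_sum]
  simp_rw [MonoidAlgebra.single_mul_single, one_mul]
  rw [MonoidAlgebra.coeff_sum, Finsupp.finset_sum_apply]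
  have h : ∀ x : G, (∑ y ∈ Y, MonoidAlgebra.single (x * y) (1:ℤ)).coeff g
      = if x⁻¹ * g ∈ Y then 1 else 0 := by
    intro x
    rw [MonoidAlgebra.coeff_sum, Finsupp.finset_sum_apply]
    simp_rw [MonoidAlgebra.coeff_single, Finsupp.single_apply]
    rw [← Finset.sum_ite_eq' Y (x⁻¹ * g) (fun _ => (1:ℤ))]
    refine Finset.sum_congr rfl fun y _ => ?_
    congr 1
    simp [eq_comm, eq_inv_mul_iff_mul_eq]
  rw [Finset.sum_congr rfl fun x _ => h x, Finset.sum_boole]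

end helpers

section line
variable {F : Type*} [Field F] [Fintype F] [DecidableEq F]

lemma line_card (A B c : F) (h : ¬(A = 0 ∧ B = 0)) :
    ((Finset.univ : Finset (F × F)).filter (fun p => A * p.1 + B * p.2 = c)).card
      = Fintype.card F := by
  rw [not_and_or] at h
  rcases h with hA | hB
  · rw [← Finset.card_univ (α := F)]
    apply Finset.card_nbij' (fun p => p.2) (fun t => ((c - B * t) / A, t))
    · intro a _; simp
    · intro t _
      simp only [Finset.mem_coe, Finset.mem_filter, Finset.mem_univ, true_and]
      field_simp; ring
    · intro p hp
      simp only [Finset.mem_coe, Finset.mem_filter, Finset.mem_univ, true_and] at hp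
      ext <;> simp
      · field_simp; linear_combination -hp
    · intro t _; rfl
  · rw [← Finset.card_univ (α := F)]
    apply Finset.card_nbij' (fun p => p.1) (fun t => (t, (c - A * t) / B))
    · intro a _; simp
    · intro t _
      simp only [Finset.mem_coe, Finset.mem_filter, Finset.mem_univ, true_and]
      field_simp; ring
    · intro p hp
      simp only [Finset.mem_coe, Finset.mem_filter, Finset.mem_univ, true_and] at hp
      ext <;> simp
      · field_simp; linear_combination -hp
    · intro t _; rfl

end line

lemma Heis.inv_mul_def' {F : Type*} [Field F] (x y : Heis F) :
    x⁻¹ * y = (y.1 - x.1, y.2.1 - x.2.1, y.2.2 - x.2.2 + x.1 * x.2.1 - x.1 * y.2.1) := by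
  obtain ⟨a, b, c⟩ := x; obtain ⟨d, e, f⟩ := y
  simp only [Heis.mul_def, Heis.inv_def]
  exact Prod.ext (by show -a + d = d - a; ring) (Prod.ext (by show -b + e = e - b; ring)
    (by show -c + a * b + f + -a * e = f - c + a * b - a * e; ring))


/-- For an odd prime power `q`, a nonsquare `ε ∈ F_q` and
`X_i = {e} ∪ {(α, β, αβ/2 + (α² − εβ²)i) : (α,β) ≠ (0,0)}` in the Heisenberg group `G`
over `F_q` with center `Z`: `X_i · X_{−i} = q²·e + q·(G − Z)` in `ℤG`, i.e. each `X_i`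
is a semiregular RDS with forbidden subgroup `Z` and parameters `(q², q, q², q)`. -/
theorem stmt14 {F : Type*} [Field F] [Fintype F] [DecidableEq F]
    (q : ℕ) (hq : Fintype.card F = q) (hodd : Odd q)
    (ε : F) (hε : ∀ γ : F, γ ^ 2 ≠ ε)
    (X : F → Finset (Heis F))
    (hX : ∀ i : F, X i = insert (1 : Heis F)
      ((Finset.univ : Finset (Heis F)).filter
        (fun g => (g.1, g.2.1) ≠ (0, 0) ∧
          g.2.2 = g.1 * g.2.1 / 2 + (g.1 ^ 2 - ε * g.2.1 ^ 2) * i)))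
    (Z : Finset (Heis F))
    (hZ : Z = (Finset.univ : Finset (Heis F)).filter (fun g => g.1 = 0 ∧ g.2.1 = 0)) :
    ∀ i : F, (X i).card = q ^ 2 ∧
      gsum (X i) * gsum (X (-i)) =
        (q ^ 2) • (1 : MonoidAlgebra ℤ (Heis F)) +
          q • (gsum (Finset.univ : Finset (Heis F)) - gsum Z) := by
  -- characteristic is odd
  have h2 : (2 : F) ≠ 0 := by
    intro h20
    have hchar : ringChar F ∣ 2 := by
      rw [← CharP.cast_eq_zero_iff F (ringChar F) 2]
      exact_mod_cast h20
    have hp : (ringChar F).Prime := CharP.char_is_prime F (ringChar F)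
    have : ringChar F = 2 := (Nat.prime_dvd_prime_iff_eq hp Nat.prime_two).mp hchar
    have := FiniteField.even_card_of_char_two this
    rw [hq] at this
    rcases Nat.odd_iff.mp hodd with h'
    omega
  have h4 : (4 : F) ≠ 0 := by
    intro h
    apply h2
    have : (4 : F) = 2 * 2 := by norm_num
    rcases mul_eq_zero.mp (this ▸ h) with h' | h' <;> exact h'
  -- membership characterization
  have hmem : ∀ (j : F) (g : Heis F), g ∈ X j ↔
      g.2.2 = g.1 * g.2.1 / 2 + (g.1 ^ 2 - ε * g.2.1 ^ 2) * j := by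
    intro j g
    rw [hX j]
    simp only [Finset.mem_insert, Finset.mem_filter, Finset.mem_univ, true_and]
    obtain ⟨u, v, w⟩ := g
    constructor
    · rintro (h1 | ⟨-, h⟩)
      · obtain ⟨rfl, rfl, rfl⟩ : u = 0 ∧ v = 0 ∧ w = 0 := by
          have h1' : ((u, v, w) : F × F × F) = ((0, 0, 0) : F × F × F) := h1
          simpa [Prod.ext_iff] using h1'
        simp
      · exact h
    · intro h
      by_cases h0 : ((u, v) : F × F) = (0, 0)
      · left
        have hu : u = 0 := congrArg Prod.fst h0
        have hv : v = 0 := congrArg Prod.snd h0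
        subst hu; subst hv
        rw [Heis.one_def]
        refine Prod.ext rfl (Prod.ext rfl ?_)
        simpa using h
      · exact Or.inr ⟨h0, h⟩
  -- X j as an image
  have himg : ∀ j : F, X j = (Finset.univ : Finset (F × F)).image (β := Heis F)
      (fun p => (show Heis F from (p.1, p.2, p.1 * p.2 / 2 + (p.1 ^ 2 - ε * p.2 ^ 2) * j))) := by
    intro j
    ext g
    rw [hmem j g]
    rw [Finset.mem_image]
    simp only [Finset.mem_univ, true_and]
    obtain ⟨u, v, w⟩ := g
    constructor
    · intro h
      exact ⟨(u, v), Prod.ext rfl (Prod.ext rfl h.symm)⟩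
    · rintro ⟨p, hp⟩
      obtain ⟨rfl, rfl, h3⟩ : p.1 = u ∧ p.2 = v ∧
          p.1 * p.2 / 2 + (p.1 ^ 2 - ε * p.2 ^ 2) * j = w := by
        have hp' : ((p.1, p.2, p.1 * p.2 / 2 + (p.1 ^ 2 - ε * p.2 ^ 2) * j) : F × F × F)
            = ((u, v, w) : F × F × F) := hp
        simpa [Prod.ext_iff] using hp'
      exact h3.symm
  -- injectivity of the parametrization
  have hinj : ∀ j : F, Function.Injective
      (fun p : F × F => (show Heis F from (p.1, p.2, p.1 * p.2 / 2 + (p.1 ^ 2 - ε * p.2 ^ 2) * j))) := by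
    intro j a b hab
    have hab' : ((a.1, a.2, a.1 * a.2 / 2 + (a.1 ^ 2 - ε * a.2 ^ 2) * j) : F × F × F)
        = (b.1, b.2, b.1 * b.2 / 2 + (b.1 ^ 2 - ε * b.2 ^ 2) * j) := hab
    obtain ⟨e1, e2, -⟩ := Prod.ext_iff.mp hab' |>.imp id (fun h => Prod.ext_iff.mp h)
    exact Prod.ext e1 e2
  have hcard : ∀ j : F, (X j).card = q ^ 2 := by
    intro j
    rw [himg j, Finset.card_image_of_injective _ (hinj j), Finset.card_univ,
      Fintype.card_prod, hq, sq]
  intro i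
  refine ⟨hcard i, ?_⟩
  refine MonoidAlgebra.ext (Finsupp.ext fun g => ?_)
  rw [gsum_mul_apply]
  have hZg : (g ∈ Z) = (g.1 = 0 ∧ g.2.1 = 0) := by rw [hZ]; simp
  have hone : ((1 : Heis F) = g) = (g.1 = 0 ∧ g.2.1 = 0 ∧ g.2.2 = 0) := by
    obtain ⟨u, v, w⟩ := g
    rw [Heis.one_def]
    have : (((0, 0, 0) : F × F × F) = ((u, v, w) : F × F × F)) = (u = 0 ∧ v = 0 ∧ w = 0) := by
      simp [Prod.ext_iff, eq_comm]
    exact this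
  have hrhs : ((q ^ 2) • (1 : MonoidAlgebra ℤ (Heis F)) +
      q • (gsum (Finset.univ : Finset (Heis F)) - gsum Z)).coeff g
      = (q ^ 2 : ℤ) * (if g.1 = 0 ∧ g.2.1 = 0 ∧ g.2.2 = 0 then 1 else 0)
        + (q : ℤ) * (1 - if g.1 = 0 ∧ g.2.1 = 0 then 1 else 0) := by
    rw [MonoidAlgebra.coeff_add, Finsupp.add_apply, MonoidAlgebra.coeff_smul, Finsupp.smul_apply,
      MonoidAlgebra.coeff_smul, Finsupp.smul_apply, MonoidAlgebra.coeff_sub, Finsupp.sub_apply,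
      gsum_apply, gsum_apply, MonoidAlgebra.one_def, MonoidAlgebra.coeff_single_apply]
    simp only [hone, hZg, Finset.mem_univ, if_true, nsmul_eq_mul]
    push_cast
    ring
  rw [hrhs]
  have key : (((X i).filter (fun x => x⁻¹ * g ∈ X (-i))).card : ℤ)
      = (((Finset.univ : Finset (F × F)).filter (fun p =>
          (g.2.1 / 2 + 2 * g.1 * i) * p.1 + (-(g.1 / 2) - 2 * ε * g.2.1 * i) * p.2
            = g.2.2 - g.1 * g.2.1 / 2 - (ε * g.2.1 ^ 2 - g.1 ^ 2) * i)).card : ℤ) := by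
    congr 1
    rw [himg i, Finset.filter_image, Finset.card_image_of_injective _ (hinj i)]
    congr 1
    apply Finset.filter_congr
    intro p _
    rw [hmem (-i)]
    show (-(p.1 * p.2 / 2 + (p.1 ^ 2 - ε * p.2 ^ 2) * i) + p.1 * p.2 + g.2.2 + -p.1 * g.2.1
        = (-p.1 + g.1) * (-p.2 + g.2.1) / 2
          + ((-p.1 + g.1) ^ 2 - ε * (-p.2 + g.2.1) ^ 2) * (-i)) ↔ _
    constructor <;> intro h
    · field_simp [h2] at h ⊢
      linear_combination -h
    · field_simp [h2] at h ⊢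
      linear_combination -h
  refine key.trans ?_
  by_cases hc : g.1 = 0 ∧ g.2.1 = 0
  · obtain ⟨h1', h2'⟩ := hc
    rw [h1', h2']
    by_cases hw : g.2.2 = 0
    · rw [hw]
      simp only [eq_self_iff_true, true_and, and_self, if_true]
      have he : ((Finset.univ : Finset (F × F)).filter (fun p =>
          ((0:F) / 2 + 2 * 0 * i) * p.1 + (-((0:F) / 2) - 2 * ε * 0 * i) * p.2
            = (0:F) - 0 * 0 / 2 - (ε * 0 ^ 2 - 0 ^ 2) * i)) = Finset.univ := by
        apply Finset.filter_true_of_mem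
        intro p _
        ring
      rw [he, Finset.card_univ, Fintype.card_prod, hq]
      push_cast
      ring
    · have he : ((Finset.univ : Finset (F × F)).filter (fun p =>
          ((0:F) / 2 + 2 * 0 * i) * p.1 + (-((0:F) / 2) - 2 * ε * 0 * i) * p.2
            = g.2.2 - 0 * 0 / 2 - (ε * 0 ^ 2 - 0 ^ 2) * i)) = ∅ := by
        apply Finset.filter_false_of_mem
        intro p _
        intro hcontra
        apply hw
        linear_combination -hcontra
      rw [he]
      simp [hw]
  · have hAB : ¬((g.2.1 / 2 + 2 * g.1 * i) = 0 ∧ (-(g.1 / 2) - 2 * ε * g.2.1 * i) = 0) := by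
      rintro ⟨hA, hB⟩
      field_simp [h2] at hA hB
      by_cases hi : i = 0
      · subst hi
        apply hc
        constructor
        · linear_combination -hB
        · linear_combination hA
      · have hu : g.1 ≠ 0 := by
          intro hu0
          apply hc
          refine ⟨hu0, ?_⟩
          rw [hu0] at hA
          linear_combination hA
        apply hε ((4 * i)⁻¹)
        have h4i : (4 : F) * i ≠ 0 := mul_ne_zero h4 hi
        have h16 : 16 * ε * i ^ 2 = 1 := by
          have key2 : g.1 * (1 - 16 * ε * i ^ 2) = 0 := by
            linear_combination -hB - 4 * ε * i * hA
          rcases mul_eq_zero.mp key2 with h' | h'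
          · exact absurd h' hu
          · linear_combination -h'
        field_simp
        linear_combination -h16
    rw [line_card _ _ _ hAB, hq]
    have h1 : ¬(g.1 = 0 ∧ g.2.1 = 0 ∧ g.2.2 = 0) := fun ⟨a, b, _⟩ => hc ⟨a, b⟩
    simp [hc, h1]
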